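/- Fix c > 0 and M* ∈ ℝ^{d₁×d₂}. For all U ∈ ℝ^{d₁×r}, V ∈ ℝ^{d₂×r} with ‖U‖_F² ≤ c‖M*‖_F and ‖V‖_F² ≤ c‖M*‖_F, and for all Δ_U ∈ ℝ^{d₁×r}, Δ_V ∈ ℝ^{d₂×r}, the Hessian quadratic form of f at (U, V) satisfies 2⟨UVᵀ − M*, Δ_U Δ_Vᵀ⟩ + ‖U Δ_Vᵀ + Δ_U Vᵀ‖_F² ≤ (6c + 2)·‖M*‖_F·(‖Δ_U‖_F² + ‖Δ_V‖_F²). In particular, f is ((6c+2)‖M*‖_F)-smooth on this bounded set. -/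
import Mathlib

open Matrix

noncomputable def frob {m n : Type*} [Fintype m] [Fintype n] (A : Matrix m n ℝ) : ℝ :=
  Real.sqrt (∑ i, ∑ j, A i j ^ 2)

def minner {m n : Type*} [Fintype m] [Fintype n] (A B : Matrix m n ℝ) : ℝ :=
  ∑ i, ∑ j, A i j * B i j

section aux
variable {m n p : Type*} [Fintype m] [Fintype n] [Fintype p]

lemma sum_sq_nonneg' (A : Matrix m n ℝ) : 0 ≤ ∑ i, ∑ j, A i j ^ 2 :=
  Finset.sum_nonneg fun _ _ => Finset.sum_nonneg fun _ _ => sq_nonneg _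

lemma frob_nonneg (A : Matrix m n ℝ) : 0 ≤ frob A := Real.sqrt_nonneg _

lemma frob_sq (A : Matrix m n ℝ) : frob A ^ 2 = ∑ i, ∑ j, A i j ^ 2 :=
  Real.sq_sqrt (sum_sq_nonneg' A)

lemma minner_le (A B : Matrix m n ℝ) : minner A B ≤ frob A * frob B := by
  have key : (∑ q : m × n, A q.1 q.2 * B q.1 q.2) ^ 2
      ≤ (∑ q : m × n, A q.1 q.2 ^ 2) * (∑ q : m × n, B q.1 q.2 ^ 2) :=
    Finset.sum_mul_sq_le_sq_mul_sq Finset.univ _ _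
  have hm : minner A B = ∑ q : m × n, A q.1 q.2 * B q.1 q.2 :=
    (Fintype.sum_prod_type (f := fun q : m × n => A q.1 q.2 * B q.1 q.2)).symm
  have hA : (∑ q : m × n, A q.1 q.2 ^ 2) = ∑ i, ∑ j, A i j ^ 2 :=
    Fintype.sum_prod_type (f := fun q : m × n => A q.1 q.2 ^ 2)
  have hB : (∑ q : m × n, B q.1 q.2 ^ 2) = ∑ i, ∑ j, B i j ^ 2 :=
    Fintype.sum_prod_type (f := fun q : m × n => B q.1 q.2 ^ 2)
  calc minner A B ≤ |minner A B| := le_abs_self _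
    _ = Real.sqrt ((minner A B) ^ 2) := (Real.sqrt_sq_eq_abs _).symm
    _ ≤ Real.sqrt ((∑ i, ∑ j, A i j ^ 2) * (∑ i, ∑ j, B i j ^ 2)) := by
        apply Real.sqrt_le_sqrt; rw [hm]; rw [hA, hB] at key; exact key
    _ = frob A * frob B := Real.sqrt_mul (sum_sq_nonneg' A) _

lemma frob_add_le (A B : Matrix m n ℝ) : frob (A + B) ≤ frob A + frob B := by
  have expand : (∑ i, ∑ j, (A + B) i j ^ 2)
      = frob A ^ 2 + 2 * minner A B + frob B ^ 2 := by
    rw [frob_sq, frob_sq, minner]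
    simp only [Matrix.add_apply, Finset.mul_sum]
    rw [← Finset.sum_add_distrib, ← Finset.sum_add_distrib]
    apply Finset.sum_congr rfl; intro i _
    rw [← Finset.sum_add_distrib, ← Finset.sum_add_distrib]
    apply Finset.sum_congr rfl; intro j _; ring
  have hle : (∑ i, ∑ j, (A + B) i j ^ 2) ≤ (frob A + frob B) ^ 2 := by
    rw [expand]
    have := minner_le A B
    nlinarith [frob_nonneg A, frob_nonneg B]
  calc frob (A + B) = Real.sqrt (∑ i, ∑ j, (A + B) i j ^ 2) := rfl
    _ ≤ Real.sqrt ((frob A + frob B) ^ 2) := Real.sqrt_le_sqrt hle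
    _ = |frob A + frob B| := Real.sqrt_sq_eq_abs _
    _ = frob A + frob B := abs_of_nonneg (add_nonneg (frob_nonneg A) (frob_nonneg B))

lemma frob_sub_le (A B : Matrix m n ℝ) : frob (A - B) ≤ frob A + frob B := by
  have hneg : frob (-B) = frob B := by
    unfold frob; congr 1; simp
  calc frob (A - B) = frob (A + (-B)) := by rw [sub_eq_add_neg]
    _ ≤ frob A + frob (-B) := frob_add_le _ _
    _ = frob A + frob B := by rw [hneg]

lemma frob_mul_le (A : Matrix m p ℝ) (B : Matrix p n ℝ) :
    frob (A * B) ≤ frob A * frob B := by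
  have entry : ∀ i j, ((A * B) i j) ^ 2 ≤ (∑ k, A i k ^ 2) * (∑ k, B k j ^ 2) := by
    intro i j
    have := Finset.sum_mul_sq_le_sq_mul_sq Finset.univ (fun k => A i k) (fun k => B k j)
    simpa [Matrix.mul_apply] using this
  have hsum : (∑ i, ∑ j, ((A * B) i j) ^ 2)
      ≤ (∑ i, ∑ k, A i k ^ 2) * (∑ k, ∑ j, B k j ^ 2) := by
    calc (∑ i, ∑ j, ((A * B) i j) ^ 2)
        ≤ ∑ i, ∑ j, (∑ k, A i k ^ 2) * (∑ k, B k j ^ 2) := by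
          apply Finset.sum_le_sum; intro i _
          apply Finset.sum_le_sum; intro j _
          exact entry i j
      _ = ∑ i, (∑ k, A i k ^ 2) * (∑ j, ∑ k, B k j ^ 2) := by
          apply Finset.sum_congr rfl; intro i _
          rw [← Finset.mul_sum]
      _ = (∑ i, ∑ k, A i k ^ 2) * (∑ j, ∑ k, B k j ^ 2) := by
          rw [← Finset.sum_mul]
      _ = (∑ i, ∑ k, A i k ^ 2) * (∑ k, ∑ j, B k j ^ 2) := by
          congr 1; rw [Finset.sum_comm]
  calc frob (A * B) = Real.sqrt (∑ i, ∑ j, ((A * B) i j) ^ 2) := rfl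
    _ ≤ Real.sqrt ((∑ i, ∑ k, A i k ^ 2) * (∑ k, ∑ j, B k j ^ 2)) :=
        Real.sqrt_le_sqrt hsum
    _ = frob A * frob B := Real.sqrt_mul (sum_sq_nonneg' A) _

lemma frob_transpose (A : Matrix m n ℝ) : frob Aᵀ = frob A := by
  unfold frob; congr 1
  rw [Finset.sum_comm]
  simp [Matrix.transpose_apply]

end aux

/-- Smoothness of `f(U,V) = ½‖UVᵀ − M*‖_F²` over a bounded set: the Hessian quadratic
form at `(U,V)` in direction `(Δ_U, Δ_V)` is at most `(6c+2)‖M*‖_F ‖Δ‖_F²` whenever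
`‖U‖_F², ‖V‖_F² ≤ c‖M*‖_F`. -/
theorem hessian_bound_on_bounded_set {d₁ d₂ r : ℕ} (c : ℝ) (hc : 0 < c)
    (M : Matrix (Fin d₁) (Fin d₂) ℝ)
    (U : Matrix (Fin d₁) (Fin r) ℝ) (V : Matrix (Fin d₂) (Fin r) ℝ)
    (hU : frob U ^ 2 ≤ c * frob M) (hV : frob V ^ 2 ≤ c * frob M)
    (DU : Matrix (Fin d₁) (Fin r) ℝ) (DV : Matrix (Fin d₂) (Fin r) ℝ) :
    2 * minner (U * Vᵀ - M) (DU * DVᵀ) + frob (U * DVᵀ + DU * Vᵀ) ^ 2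
      ≤ (6 * c + 2) * frob M * (frob DU ^ 2 + frob DV ^ 2) := by
  set u := frob U with hu
  set v := frob V with hv
  set a := frob DU with ha
  set b := frob DV with hb
  set mM := frob M with hM
  have hu0 : 0 ≤ u := frob_nonneg U
  have hv0 : 0 ≤ v := frob_nonneg V
  have ha0 : 0 ≤ a := frob_nonneg DU
  have hb0 : 0 ≤ b := frob_nonneg DV
  have hM0 : 0 ≤ mM := frob_nonneg M
  have h1 : frob (U * Vᵀ - M) ≤ u * v + mM := by
    calc frob (U * Vᵀ - M) ≤ frob (U * Vᵀ) + mM := frob_sub_le _ _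
      _ ≤ u * v + mM := by
          have := frob_mul_le U Vᵀ
          rw [frob_transpose V] at this
          linarith
  have h2 : frob (DU * DVᵀ) ≤ a * b := by
    have := frob_mul_le DU DVᵀ
    rwa [frob_transpose DV] at this
  have hab : 0 ≤ a * b := mul_nonneg ha0 hb0
  have hterm1 : minner (U * Vᵀ - M) (DU * DVᵀ) ≤ (u * v + mM) * (a * b) := by
    calc minner (U * Vᵀ - M) (DU * DVᵀ) ≤ frob (U * Vᵀ - M) * frob (DU * DVᵀ) :=
          minner_le _ _
      _ ≤ (u * v + mM) * (a * b) :=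
          mul_le_mul h1 h2 (frob_nonneg _)
            (add_nonneg (mul_nonneg hu0 hv0) hM0)
  have huv : u * v ≤ c * mM := by nlinarith
  have hle : frob (U * DVᵀ + DU * Vᵀ) ≤ u * b + a * v := by
    calc frob (U * DVᵀ + DU * Vᵀ) ≤ frob (U * DVᵀ) + frob (DU * Vᵀ) :=
          frob_add_le _ _
      _ ≤ u * b + a * v := by
          have h3 := frob_mul_le U DVᵀ
          have h4 := frob_mul_le DU Vᵀ
          rw [frob_transpose DV] at h3
          rw [frob_transpose V] at h4
          linarith
  have hterm2 : frob (U * DVᵀ + DU * Vᵀ) ^ 2 ≤ (u * b + a * v) ^ 2 := by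
    have h0 := frob_nonneg (U * DVᵀ + DU * Vᵀ)
    nlinarith
  have hcm0 : 0 ≤ c * mM := mul_nonneg hc.le hM0
  have e1 : 2 * minner (U * Vᵀ - M) (DU * DVᵀ) ≤ (c * mM + mM) * (a ^ 2 + b ^ 2) := by
    have h2ab : 2 * (a * b) ≤ a ^ 2 + b ^ 2 := by nlinarith [sq_nonneg (a - b)]
    have hcm : u * v + mM ≤ c * mM + mM := by linarith
    calc 2 * minner (U * Vᵀ - M) (DU * DVᵀ) ≤ 2 * ((u * v + mM) * (a * b)) := by
          linarith
      _ = (u * v + mM) * (2 * (a * b)) := by ring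
      _ ≤ (c * mM + mM) * (a ^ 2 + b ^ 2) :=
          mul_le_mul hcm h2ab (by linarith) (by linarith)
  have e2 : frob (U * DVᵀ + DU * Vᵀ) ^ 2 ≤ 2 * (c * mM) * (a ^ 2 + b ^ 2) := by
    have hub : u ^ 2 * b ^ 2 ≤ c * mM * b ^ 2 :=
      mul_le_mul_of_nonneg_right hU (sq_nonneg b)
    have hav : v ^ 2 * a ^ 2 ≤ c * mM * a ^ 2 :=
      mul_le_mul_of_nonneg_right hV (sq_nonneg a)
    nlinarith [sq_nonneg (u * b - a * v)]
  have hfin : (c * mM + mM) * (a ^ 2 + b ^ 2) + 2 * (c * mM) * (a ^ 2 + b ^ 2)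
      ≤ (6 * c + 2) * mM * (a ^ 2 + b ^ 2) := by
    have hnn : 0 ≤ (3 * c + 1) * mM * (a ^ 2 + b ^ 2) := by positivity
    nlinarith
  linarith
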